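/- Let Q(x) = ⟨x, T x⟩ be a Legendre form on H. Then the set K of parameter tuples (T', T'_1,…,T'_m, c'_1,…,c'_m) such that there is no nonzero v with T'_i v = 0, ⟨c'_i, v⟩ ≤ 0 for all i and ⟨v, T' v⟩ ≤ 0, is open in L(H)^{m+1} × H^m, at each point whose first component defines a Legendre form. -/

import Mathlib

noncomputable section
open Filter Topology RealInnerProductSpace

/-- weak convergence of a sequence in a Hilbert space -/
def WeakConv {H : Type*} [NormedAddCommGroup H] [InnerProductSpace ℝ H]
    (x : ℕ → H) (x₀ : H) : Prop :=
  ∀ y : H, Tendsto (fun k => ⟪x k, y⟫) atTop (𝓝 ⟪x₀, y⟫)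

/-- weak lower semicontinuity: lower semicontinuity for the weak topology -/
def WeaklyLSC {H : Type*} [NormedAddCommGroup H] [InnerProductSpace ℝ H]
    (Q : H → ℝ) : Prop :=
  LowerSemicontinuous fun x : WeakSpace ℝ H => Q ((toWeakSpace ℝ H).symm x)

/-- `Q` is a Legendre form. -/
def IsLegendreForm {H : Type*} [NormedAddCommGroup H] [InnerProductSpace ℝ H]
    (Q : H → ℝ) : Prop :=
  WeaklyLSC Q ∧ ∀ (x : ℕ → H) (x₀ : H), WeakConv x x₀ →
    Tendsto (fun k => Q (x k)) atTop (𝓝 (Q x₀)) → Tendsto x atTop (𝓝 x₀)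

lemma aux_weak_subseq {H : Type*} [NormedAddCommGroup H] [InnerProductSpace ℝ H] [CompleteSpace H]
    (v : ℕ → H) (hv : ∀ k, ‖v k‖ ≤ 1) :
    ∃ (v₀ : H) (φ : ℕ → ℕ), StrictMono φ ∧
      ∀ y : H, Tendsto (fun k => ⟪v (φ k), y⟫) atTop (𝓝 ⟪v₀, y⟫) := by
  have hmem : ∀ k, (fun j => ⟪v k, v j⟫) ∈ Set.pi Set.univ (fun _ : ℕ => Set.Icc (-1:ℝ) 1) := by
    intro k j _
    have h1 : |⟪v k, v j⟫| ≤ 1 := by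
      refine le_trans (abs_real_inner_le_norm _ _) ?_
      nlinarith [hv k, hv j, norm_nonneg (v k), norm_nonneg (v j)]
    exact Set.mem_Icc.mpr (abs_le.mp h1)
  obtain ⟨a, -, φ, hφ, hconv⟩ :=
    (isCompact_univ_pi (fun _ : ℕ => isCompact_Icc)).isSeqCompact hmem
  rw [tendsto_pi_nhds] at hconv
  set K := Submodule.span ℝ (Set.range v) with hK
  set M := K.topologicalClosure with hM
  haveI : CompleteSpace M := K.isClosed_topologicalClosure.completeSpace_coe
  have hvM : ∀ k, v k ∈ M := fun k =>
    K.le_topologicalClosure (Submodule.subset_span ⟨k, rfl⟩)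
  have hspan : ∀ z ∈ K, ∃ L, Tendsto (fun k => ⟪v (φ k), z⟫) atTop (𝓝 L) := by
    intro z hz
    induction hz using Submodule.span_induction with
    | mem x hx =>
      obtain ⟨j, rfl⟩ := hx
      exact ⟨a j, hconv j⟩
    | zero => exact ⟨0, by simpa using (tendsto_const_nhds : Tendsto (fun _ : ℕ => (0:ℝ)) _ _)⟩
    | add x y _ _ hx hy =>
      obtain ⟨L1, h1⟩ := hx; obtain ⟨L2, h2⟩ := hy
      exact ⟨L1 + L2, by simpa [inner_add_right] using h1.add h2⟩
    | smul c x _ hx =>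
      obtain ⟨L, h⟩ := hx
      exact ⟨c * L, by simpa [real_inner_smul_right] using h.const_mul c⟩
  have hclos : ∀ z : H, z ∈ M → ∃ L, Tendsto (fun k => ⟪v (φ k), z⟫) atTop (𝓝 L) := by
    intro z hz
    have hc : CauchySeq (fun k => ⟪v (φ k), z⟫) := by
      rw [Metric.cauchySeq_iff]
      intro ε hε
      have hzc : z ∈ closure (K : Set H) := hz
      obtain ⟨z', hz'K, hd⟩ := Metric.mem_closure_iff.mp hzc (ε/4) (by linarith)
      obtain ⟨L, hL⟩ := hspan z' hz'K
      have hcs := hL.cauchySeq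
      rw [Metric.cauchySeq_iff] at hcs
      obtain ⟨N, hN⟩ := hcs (ε/4) (by linarith)
      refine ⟨N, fun p hp q hq => ?_⟩
      have e1 : ∀ k, |⟪v (φ k), z⟫ - ⟪v (φ k), z'⟫| ≤ ε/4 := by
        intro k
        rw [← inner_sub_right]
        refine le_trans (abs_real_inner_le_norm _ _) ?_
        have h1 : ‖z - z'‖ ≤ ε/4 := by
          rw [← dist_eq_norm]; exact le_of_lt hd
        nlinarith [hv (φ k), norm_nonneg (z - z')]
      have e2 := hN p hp q hq
      rw [Real.dist_eq] at e2 ⊢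
      calc |⟪v (φ p), z⟫ - ⟪v (φ q), z⟫|
          ≤ |⟪v (φ p), z⟫ - ⟪v (φ p), z'⟫| + |⟪v (φ p), z'⟫ - ⟪v (φ q), z'⟫|
            + |⟪v (φ q), z'⟫ - ⟪v (φ q), z⟫| := by
            have := abs_sub_le (⟪v (φ p), z⟫) (⟪v (φ p), z'⟫) (⟪v (φ q), z⟫)
            have := abs_sub_le (⟪v (φ p), z'⟫) (⟪v (φ q), z'⟫) (⟪v (φ q), z⟫)
            linarith
        _ < ε := by
            have := e1 p
            have e3 := e1 q
            rw [abs_sub_comm] at e3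
            linarith
    exact cauchySeq_tendsto_of_complete hc
  have hall : ∀ y : H, ∃ L, Tendsto (fun k => ⟪v (φ k), y⟫) atTop (𝓝 L) := by
    intro y
    obtain ⟨p, hp, q, hq, hyq⟩ := M.exists_add_mem_mem_orthogonal y
    obtain ⟨L, hL⟩ := hclos p hp
    refine ⟨L, ?_⟩
    have hzero : ∀ k, ⟪v (φ k), q⟫ = (0:ℝ) :=
      fun k => (Submodule.mem_orthogonal M q).mp hq (v (φ k)) (hvM (φ k))
    have : ∀ k, ⟪v (φ k), y⟫ = ⟪v (φ k), p⟫ := by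
      intro k; rw [hyq, inner_add_right, hzero, add_zero]
    simpa [this] using hL
  choose L hL using hall
  have hadd : ∀ y z, L (y + z) = L y + L z := fun y z =>
    tendsto_nhds_unique (hL (y + z)) (by simpa [inner_add_right] using (hL y).add (hL z))
  have hsmul : ∀ (c : ℝ) (y : H), L (c • y) = c * L y := fun c y =>
    tendsto_nhds_unique (hL (c • y)) (by simpa [real_inner_smul_right] using (hL y).const_mul c)
  have hbound : ∀ y, |L y| ≤ 1 * ‖y‖ := by
    intro y
    refine le_of_tendsto (hL y).abs (Eventually.of_forall fun k => ?_)
    refine le_trans (abs_real_inner_le_norm _ _) ?_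
    have := hv (φ k)
    nlinarith [norm_nonneg y]
  let g : H →L[ℝ] ℝ :=
    LinearMap.mkContinuous
      { toFun := L, map_add' := hadd, map_smul' := hsmul } 1
      (fun y => by simpa [Real.norm_eq_abs] using hbound y)
  refine ⟨(InnerProductSpace.toDual ℝ H).symm g, φ, hφ, fun y => ?_⟩
  have : ⟪(InnerProductSpace.toDual ℝ H).symm g, y⟫ = g y :=
    InnerProductSpace.toDual_symm_apply
  rw [this]
  exact hL y

theorem stmt10 {H : Type*} [NormedAddCommGroup H] [InnerProductSpace ℝ H] [CompleteSpace H]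
    {m : ℕ} (T : H →L[ℝ] H) (Ts : Fin m → H →L[ℝ] H) (cs : Fin m → H)
    (hTsa : ∀ x y : H, ⟪T x, y⟫ = ⟪x, T y⟫)
    (hsa : ∀ i, ∀ x y : H, ⟪Ts i x, y⟫ = ⟪x, Ts i y⟫)
    (hpsd : ∀ i, ∀ x : H, 0 ≤ ⟪x, Ts i x⟫)
    (hLeg : IsLegendreForm (fun x : H => ⟪x, T x⟫))
    (hK : ∀ v : H, v ≠ 0 → ¬((∀ i, Ts i v = 0 ∧ ⟪cs i, v⟫ ≤ 0) ∧ ⟪v, T v⟫ ≤ 0)) :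
    ∃ ε > 0, ∀ (T' : H →L[ℝ] H) (Ts' : Fin m → H →L[ℝ] H) (cs' : Fin m → H),
      (∀ x y : H, ⟪T' x, y⟫ = ⟪x, T' y⟫) →
      (∀ i, ∀ x y : H, ⟪Ts' i x, y⟫ = ⟪x, Ts' i y⟫) →
      (∀ i, ∀ x : H, 0 ≤ ⟪x, Ts' i x⟫) →
      ‖((T', Ts', cs') : (H →L[ℝ] H) × (Fin m → H →L[ℝ] H) × (Fin m → H))
        - (T, Ts, cs)‖ < ε →
      ∀ v : H, v ≠ 0 → ¬((∀ i, Ts' i v = 0 ∧ ⟪cs' i, v⟫ ≤ 0) ∧ ⟪v, T' v⟫ ≤ 0) := by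
  by_contra hcon
  push_neg at hcon
  have key : ∀ k : ℕ, ∃ (T' : H →L[ℝ] H) (Ts' : Fin m → H →L[ℝ] H) (cs' : Fin m → H),
      ‖((T', Ts', cs') : (H →L[ℝ] H) × (Fin m → H →L[ℝ] H) × (Fin m → H)) - (T, Ts, cs)‖
        < 1 / (k + 1) ∧
      ∃ u : H, u ≠ 0 ∧ (∀ i, Ts' i u = 0 ∧ ⟪cs' i, u⟫ ≤ 0) ∧ ⟪u, T' u⟫ ≤ 0 := by
    intro k
    obtain ⟨T', Ts', cs', _, _, _, hn, u, hu, hP⟩ := hcon (1 / (k + 1)) (by positivity)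
    exact ⟨T', Ts', cs', hn, u, hu, hP⟩
  choose T' Ts' cs' hnorm u hu hP using key
  set δ : ℕ → ℝ := fun k => 1 / (k + 1) with hδdef
  have hδ : Tendsto δ atTop (𝓝 0) := tendsto_one_div_add_atTop_nhds_zero_nat
  have hδpos : ∀ k, 0 < δ k := fun k => by positivity
  set v : ℕ → H := fun k => ‖u k‖⁻¹ • u k with hvdef
  have hvnorm : ∀ k, ‖v k‖ = 1 := fun k => norm_smul_inv_norm (hu k)
  have hinv : ∀ k, 0 < ‖u k‖⁻¹ := fun k => inv_pos.mpr (norm_pos_iff.mpr (hu k))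
  -- scaled properties
  have hTs'v : ∀ k i, Ts' k i (v k) = 0 := by
    intro k i
    rw [hvdef]
    simp [map_smul, ((hP k).1 i).1]
  have hcs'v : ∀ k i, ⟪cs' k i, v k⟫ ≤ 0 := by
    intro k i
    rw [hvdef]
    simp only [inner_smul_right]
    exact mul_nonpos_of_nonneg_of_nonpos (hinv k).le ((hP k).1 i).2
  have hT'v : ∀ k, ⟪v k, T' k (v k)⟫ ≤ 0 := by
    intro k
    rw [hvdef]
    simp only [map_smul, real_inner_smul_left, real_inner_smul_right]
    rw [← mul_assoc]
    exact mul_nonpos_of_nonneg_of_nonpos (mul_nonneg (hinv k).le (hinv k).le) (hP k).2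
  -- component norm bounds
  have hTn : ∀ k, ‖T' k - T‖ < δ k := by
    intro k
    refine lt_of_le_of_lt ?_ (hnorm k)
    exact norm_fst_le (((T' k, Ts' k, cs' k) : (H →L[ℝ] H) × (Fin m → H →L[ℝ] H) × (Fin m → H))
      - (T, Ts, cs))
  have hTsn : ∀ k i, ‖Ts' k i - Ts i‖ < δ k := by
    intro k i
    refine lt_of_le_of_lt ?_ (hnorm k)
    refine le_trans ?_ (le_trans (norm_fst_le _)
      (norm_snd_le (((T' k, Ts' k, cs' k) : (H →L[ℝ] H) × (Fin m → H →L[ℝ] H) × (Fin m → H))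
        - (T, Ts, cs))))
    exact norm_le_pi_norm (fun j => Ts' k j - Ts j) i
  have hcsn : ∀ k i, ‖cs' k i - cs i‖ < δ k := by
    intro k i
    refine lt_of_le_of_lt ?_ (hnorm k)
    refine le_trans ?_ (le_trans (norm_snd_le _)
      (norm_snd_le (((T' k, Ts' k, cs' k) : (H →L[ℝ] H) × (Fin m → H →L[ℝ] H) × (Fin m → H))
        - (T, Ts, cs))))
    exact norm_le_pi_norm (fun j => cs' k j - cs j) i
  -- derived bounds on the original data
  have hTsv : ∀ i, Tendsto (fun k => Ts i (v k)) atTop (𝓝 0) := by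
    intro i
    refine squeeze_zero_norm (fun k => ?_) hδ
    have h1 : Ts i (v k) = (Ts i - Ts' k i) (v k) := by
      simp [ContinuousLinearMap.sub_apply, hTs'v k i]
    rw [h1]
    calc ‖(Ts i - Ts' k i) (v k)‖ ≤ ‖Ts i - Ts' k i‖ * ‖v k‖ :=
          ContinuousLinearMap.le_opNorm _ _
      _ ≤ δ k := by
          rw [hvnorm k, mul_one, norm_sub_rev]
          exact (hTsn k i).le
  have hcsv : ∀ i k, ⟪cs i, v k⟫ ≤ δ k := by
    intro i k
    have h1 : ⟪cs i, v k⟫ = ⟪cs i - cs' k i, v k⟫ + ⟪cs' k i, v k⟫ := by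
      rw [← inner_add_left, sub_add_cancel]
    rw [h1]
    have h2 : ⟪cs i - cs' k i, v k⟫ ≤ δ k := by
      refine le_trans (real_inner_le_norm _ _) ?_
      rw [hvnorm k, mul_one, norm_sub_rev]
      exact (hcsn k i).le
    linarith [hcs'v k i]
  have hQv : ∀ k, ⟪v k, T (v k)⟫ ≤ δ k := by
    intro k
    have h1 : ⟪v k, T (v k)⟫ = ⟪v k, (T - T' k) (v k)⟫ + ⟪v k, T' k (v k)⟫ := by
      rw [← inner_add_right]
      congr 1
      simp [ContinuousLinearMap.sub_apply]
    rw [h1]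
    have h2 : ⟪v k, (T - T' k) (v k)⟫ ≤ δ k := by
      refine le_trans (real_inner_le_norm _ _) ?_
      calc ‖v k‖ * ‖(T - T' k) (v k)‖ ≤ ‖v k‖ * (‖T - T' k‖ * ‖v k‖) := by
            have := ContinuousLinearMap.le_opNorm (T - T' k) (v k)
            nlinarith [norm_nonneg (v k)]
        _ ≤ δ k := by
            rw [hvnorm k, norm_sub_rev]
            simpa using (hTn k).le
    linarith [hT'v k]
  -- weak subsequence
  obtain ⟨v₀, φ, hφ, hw⟩ := aux_weak_subseq v (fun k => (hvnorm k).le)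
  have hδφ : Tendsto (fun k => δ (φ k)) atTop (𝓝 0) := hδ.comp hφ.tendsto_atTop
  -- first component properties of v₀
  have f1 : ∀ i, Ts i v₀ = 0 := by
    intro i
    have hz : ∀ y : H, ⟪Ts i v₀, y⟫ = 0 := by
      intro y
      have ht2 : Tendsto (fun k => ⟪v (φ k), Ts i y⟫) atTop (𝓝 0) := by
        have hcomp : Tendsto (fun k => Ts i (v (φ k))) atTop (𝓝 0) :=
          (hTsv i).comp hφ.tendsto_atTop
        have h3 : Tendsto (fun k => ⟪Ts i (v (φ k)), y⟫) atTop (𝓝 (⟪(0:H), y⟫)) :=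
          hcomp.inner tendsto_const_nhds
        simp only [inner_zero_left] at h3
        have h4 : (fun k => ⟪v (φ k), Ts i y⟫) = fun k => ⟪Ts i (v (φ k)), y⟫ :=
          funext fun k => (hsa i _ y).symm
        rw [h4]
        exact h3
      have := tendsto_nhds_unique (hw (Ts i y)) ht2
      rw [hsa i]
      exact this
    have := hz (Ts i v₀)
    exact inner_self_eq_zero.mp (by exact_mod_cast this)
  have f2 : ∀ i, ⟪cs i, v₀⟫ ≤ 0 := by
    intro i
    have h1 : ⟪v₀, cs i⟫ ≤ 0 := by
      refine le_of_tendsto_of_tendsto' (hw (cs i)) hδφ ?_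
      intro k
      rw [real_inner_comm]
      exact hcsv i (φ k)
    rwa [real_inner_comm]
  -- tendsto in the weak topology
  have hinj : Function.Injective ((topDualPairing ℝ H).flip) := by
    intro x y hxy
    have h1 := LinearMap.congr_fun hxy (InnerProductSpace.toDual ℝ H (x - y))
    simp only [LinearMap.flip_apply, topDualPairing_apply, InnerProductSpace.toDual_apply_apply] at h1
    have h2 : ⟪x - y, x - y⟫ = 0 := by
      rw [inner_sub_right, h1, sub_self]
    have h3 : x - y = 0 := inner_self_eq_zero.mp (by exact_mod_cast h2)
    exact sub_eq_zero.mp h3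
  have hWS : Tendsto (fun k => toWeakSpace ℝ H (v (φ k))) atTop (𝓝 (toWeakSpace ℝ H v₀)) := by
    refine (WeakBilin.tendsto_iff_forall_eval_tendsto (f := fun k => v (φ k)) (x := v₀) _ hinj).mpr ?_
    intro f
    have hfx : ∀ x : H, (topDualPairing ℝ H).flip x f = ⟪(InnerProductSpace.toDual ℝ H).symm f, x⟫ := by
      intro x
      rw [InnerProductSpace.toDual_symm_apply]
      rfl
    simp only [hfx]
    set w := (InnerProductSpace.toDual ℝ H).symm f
    have h2 : (fun k => ⟪w, v (φ k)⟫) = fun k => ⟪v (φ k), w⟫ :=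
      funext fun k => real_inner_comm _ _
    show Tendsto (fun k => ⟪w, v (φ k)⟫) atTop (𝓝 ⟪w, v₀⟫)
    rw [h2, real_inner_comm v₀ w]
    exact hw w
  -- lower semicontinuity along the sequence
  have hlow : ∀ c, c < ⟪v₀, T v₀⟫ → ∀ᶠ k in atTop, c < ⟪v (φ k), T (v (φ k))⟫ := by
    intro c hc
    have h1 := hLeg.1 (toWeakSpace ℝ H v₀) c
      (by simpa [LinearEquiv.symm_apply_apply] using hc)
    have h2 := hWS.eventually h1
    refine h2.mono fun k hk => ?_
    simpa [LinearEquiv.symm_apply_apply] using hk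
  have hQ0 : ⟪v₀, T v₀⟫ ≤ 0 := by
    by_contra hpos
    push_neg at hpos
    have h1 := hlow (⟪v₀, T v₀⟫ / 2) (by linarith)
    have h2 : ∀ᶠ k in atTop, δ (φ k) < ⟪v₀, T v₀⟫ / 2 :=
      hδφ.eventually_lt_const (by linarith)
    obtain ⟨k, hk1, hk2⟩ := (h1.and h2).exists
    have := hQv (φ k)
    linarith
  by_cases hv₀ : v₀ = 0
  · subst hv₀
    have hQconv : Tendsto (fun k => ⟪v (φ k), T (v (φ k))⟫) atTop (𝓝 (⟪(0:H), T 0⟫)) := by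
      have hz : ⟪(0:H), T 0⟫ = (0:ℝ) := by simp
      rw [hz]
      rw [tendsto_order]
      constructor
      · intro c hc
        exact hlow c (by simpa using hc)
      · intro c hc
        have h2 : ∀ᶠ k in atTop, δ (φ k) < c := hδφ.eventually_lt_const hc
        exact h2.mono fun k hk => lt_of_le_of_lt (hQv (φ k)) hk
    have hwc : WeakConv (v ∘ φ) 0 := by
      intro y
      exact hw y
    have hstrong := hLeg.2 (v ∘ φ) 0 hwc hQconv
    have hnorm0 : Tendsto (fun k => ‖(v ∘ φ) k‖) atTop (𝓝 ‖(0:H)‖) := hstrong.norm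
    have heq : (fun k => ‖(v ∘ φ) k‖) = fun _ => (1:ℝ) := funext fun k => hvnorm (φ k)
    rw [heq] at hnorm0
    have := tendsto_nhds_unique hnorm0 tendsto_const_nhds
    simp at this
  · exact hK v₀ hv₀ ⟨fun i => ⟨f1 i, f2 i⟩, hQ0⟩
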